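/- Let $(\Omega, \mathfrak{B}, \mathcal{P})$ be a probability space, $H$ a separable Banach space, and $(\varrho, \vc{m}) : \Omega \times \mathbb{R} \to H$ a stationary measurable process. Suppose $\mathcal{E} : H \to [0,\infty)$ is a Borel measurable function that is sequentially lower semicontinuous along the paths, in the sense that almost surely $\mathcal{E}((\varrho,\vc{m})(t)) \leq \liminf_{s \to t} \mathcal{E}((\varrho,\vc{m})(s))$ for all $t \in \mathbb{R}$, with $\mathbb{E}[\mathcal{E}((\varrho,\vc{m})(0))] < \infty$ and $t \mapsto \mathcal{E}((\varrho,\vc{m})(t))$ locally integrable a.s. Then for every fixed $t \in \mathbb{R}$, almost surely $\mathcal{E}((\varrho,\vc{m})(t)) = \lim_{\tau \to 0^+} \frac{1}{\tau}\int_t^{t+\tau} \mathcal{E}((\varrho,\vc{m})(s))\,ds = \lim_{\tau \to 0^+} \frac{1}{\tau}\int_{t-\tau}^t \mathcal{E}((\varrho,\vc{m})(s))\,ds$, provided these one-sided limits exist a.s. -/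

import Mathlib

open Filter Set Topology MeasureTheory

theorem stmt19_aux {Ω : Type*} [MeasurableSpace Ω] (P : Measure Ω) [IsProbabilityMeasure P]
    {H : Type*} [NormedAddCommGroup H] [MeasurableSpace H]
    (X : Ω → ℝ → H)
    (hmeas : Measurable (Function.uncurry X))
    (E : H → ℝ) (hE0 : ∀ h, 0 ≤ E h) (hEmeas : Measurable E)
    (hlsc : ∀ᵐ ω ∂P, ∀ t : ℝ,
      E (X ω t) ≤ Filter.liminf (fun s => E (X ω s)) (𝓝[≠] t))
    (hloc : ∀ᵐ ω ∂P, ∀ M > (0 : ℝ), IntegrableOn (fun s => E (X ω s)) (Icc (-M) M))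
    (t : ℝ) (C : ENNReal)
    (hC : ∀ s : ℝ, ∫⁻ ω, ENNReal.ofReal (E (X ω s)) ∂P = C)
    (hCfin : C ≠ ⊤)
    (A : ℝ → Set ℝ)
    (hAm : ∀ τ, MeasurableSet (A τ))
    (hAv : ∀ τ > (0:ℝ), volume (A τ) = ENNReal.ofReal τ)
    (hAs : ∀ τ > (0:ℝ), A τ ⊆ {s | s ≠ t ∧ |s - t| ≤ τ})
    (hlim : ∀ᵐ ω ∂P, ∃ l : ℝ,
      Tendsto (fun τ : ℝ => τ⁻¹ * ∫ s in A τ, E (X ω s)) (𝓝[>] 0) (𝓝 l)) :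
    ∀ᵐ ω ∂P, Tendsto (fun τ : ℝ => τ⁻¹ * ∫ s in A τ, E (X ω s)) (𝓝[>] 0)
      (𝓝 (E (X ω t))) := by
  -- integrability on A τ
  have hsubIcc : ∀ τ > (0:ℝ), A τ ⊆ Icc (-(|t| + τ)) (|t| + τ) := by
    intro τ hτ s hs
    obtain ⟨-, habs⟩ := hAs τ hτ hs
    have h1 : |s| ≤ |t| + τ := by
      have := abs_sub_abs_le_abs_sub s t; linarith
    exact abs_le.1 h1
  have hIA : ∀ᵐ ω ∂P, ∀ τ > (0:ℝ), IntegrableOn (fun s => E (X ω s)) (A τ) := by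
    filter_upwards [hloc] with ω hω τ hτ
    exact (hω (|t| + τ) (by positivity)).mono_set (hsubIcc τ hτ)
  -- pathwise lower bound from LSC
  have step1 : ∀ ω, (∀ t', E (X ω t') ≤ liminf (fun s => E (X ω s)) (𝓝[≠] t')) →
      (∀ τ > (0:ℝ), IntegrableOn (fun s => E (X ω s)) (A τ)) →
      ∀ l, Tendsto (fun τ : ℝ => τ⁻¹ * ∫ s in A τ, E (X ω s)) (𝓝[>] 0) (𝓝 l) →
      E (X ω t) ≤ l := by
    intro ω hω1 hω2 l hl
    by_contra hcon
    push_neg at hcon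
    obtain ⟨c, hlc, hcE⟩ := exists_between hcon
    have hclim : c < liminf (fun s => E (X ω s)) (𝓝[≠] t) := lt_of_lt_of_le hcE (hω1 t)
    have hbd : IsBoundedUnder (· ≥ ·) (𝓝[≠] t) (fun s => E (X ω s)) :=
      isBoundedUnder_of ⟨0, fun s => hE0 _⟩
    have hev := eventually_lt_of_lt_liminf hclim hbd
    rw [eventually_nhdsWithin_iff] at hev
    obtain ⟨δ, hδ, hball⟩ := Metric.eventually_nhds_iff.1 hev
    have hev2 : ∀ᶠ τ in 𝓝[>] (0:ℝ), c ≤ τ⁻¹ * ∫ s in A τ, E (X ω s) := by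
      filter_upwards [Ioo_mem_nhdsGT_of_mem (Set.mem_Ico.2 ⟨le_refl (0:ℝ), hδ⟩)] with τ hτ
      obtain ⟨hτ0, hτδ⟩ := hτ
      have hbound : ∀ s ∈ A τ, c ≤ E (X ω s) := by
        intro s hs
        obtain ⟨hne, habs⟩ := hAs τ hτ0 hs
        refine le_of_lt (hball ?_ hne)
        rw [Real.dist_eq]
        exact lt_of_le_of_lt habs hτδ
      have hIc : ∫ _ in A τ, c ≤ ∫ s in A τ, E (X ω s) := by
        refine setIntegral_mono_on ?_ (hω2 τ hτ0) (hAm τ) hbound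
        refine (integrableOn_const_iff (by finiteness)).2 (Or.inr ?_)
        rw [hAv τ hτ0]; exact ENNReal.ofReal_lt_top
      rw [setIntegral_const, measureReal_def, hAv τ hτ0, ENNReal.toReal_ofReal hτ0.le, smul_eq_mul] at hIc
      calc c = τ⁻¹ * (τ * c) := by field_simp
        _ ≤ τ⁻¹ * ∫ s in A τ, E (X ω s) :=
          mul_le_mul_of_nonneg_left hIc (inv_nonneg.2 hτ0.le)
    have := ge_of_tendsto hl hev2
    linarith
  -- the sequence of scales
  set τn : ℕ → ℝ := fun n => ((n : ℝ) + 1)⁻¹ with hτndef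
  have hτnpos : ∀ n, 0 < τn n := fun n => by positivity
  have hτn : Tendsto τn atTop (𝓝[>] (0:ℝ)) := by
    refine tendsto_nhdsWithin_of_tendsto_nhds_of_eventually_within _ ?_
      (Eventually.of_forall fun n => hτnpos n)
    exact tendsto_one_div_add_atTop_nhds_zero_nat.congr fun n => one_div _
  -- measurability of the averages
  have hFsm : StronglyMeasurable (fun p : Ω × ℝ => E (X p.1 p.2)) :=
    (hEmeas.comp hmeas).stronglyMeasurable
  have hfm : ∀ τ : ℝ, Measurable fun ω => τ⁻¹ * ∫ s in A τ, E (X ω s) := fun τ =>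
    measurable_const.mul
      (hFsm.integral_prod_right' (ν := volume.restrict (A τ))).measurable
  -- the expected value of each average is C
  have hEq : ∀ τ : ℝ, 0 < τ →
      ∫⁻ ω, ENNReal.ofReal (τ⁻¹ * ∫ s in A τ, E (X ω s)) ∂P = C := by
    intro τ hτ
    have hGm : Measurable fun p : Ω × ℝ => ENNReal.ofReal (E (X p.1 p.2)) :=
      ENNReal.measurable_ofReal.comp (hEmeas.comp hmeas)
    have hswap : ∫⁻ ω, ∫⁻ s in A τ, ENNReal.ofReal (E (X ω s)) ∂volume ∂P
        = ∫⁻ s in A τ, ∫⁻ ω, ENNReal.ofReal (E (X ω s)) ∂P ∂volume :=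
      lintegral_lintegral_swap hGm.aemeasurable
    have h2 : ∫⁻ s in A τ, ∫⁻ ω, ENNReal.ofReal (E (X ω s)) ∂P ∂volume
        = C * ENNReal.ofReal τ := by
      calc ∫⁻ s in A τ, ∫⁻ ω, ENNReal.ofReal (E (X ω s)) ∂P ∂volume
          = ∫⁻ _ in A τ, C ∂volume := by
            apply lintegral_congr_ae
            exact ae_of_all _ fun s => hC s
        _ = C * ENNReal.ofReal τ := by rw [setLIntegral_const, hAv τ hτ]
    calc ∫⁻ ω, ENNReal.ofReal (τ⁻¹ * ∫ s in A τ, E (X ω s)) ∂P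
        = ∫⁻ ω, ENNReal.ofReal τ⁻¹ * ∫⁻ s in A τ, ENNReal.ofReal (E (X ω s)) ∂volume ∂P := by
          apply lintegral_congr_ae
          filter_upwards [hIA] with ω hω
          rw [ENNReal.ofReal_mul (inv_nonneg.2 hτ.le),
            ofReal_integral_eq_lintegral_ofReal (hω τ hτ) (ae_of_all _ fun s => hE0 _)]
      _ = ENNReal.ofReal τ⁻¹ * ∫⁻ ω, ∫⁻ s in A τ, ENNReal.ofReal (E (X ω s)) ∂volume ∂P :=
          lintegral_const_mul' _ _ ENNReal.ofReal_ne_top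
      _ = ENNReal.ofReal τ⁻¹ * (C * ENNReal.ofReal τ) := by rw [hswap, h2]
      _ = C := by
          rw [ENNReal.ofReal_inv_of_pos hτ, mul_comm C, ← mul_assoc,
            ENNReal.inv_mul_cancel (ENNReal.ofReal_pos.2 hτ).ne' ENNReal.ofReal_ne_top, one_mul]
  -- Fatou
  set L : Ω → ENNReal := fun ω =>
    liminf (fun n => ENNReal.ofReal ((τn n)⁻¹ * ∫ s in A (τn n), E (X ω s))) atTop with hLdef
  have hLm : Measurable L :=
    Measurable.liminf fun n => ENNReal.measurable_ofReal.comp (hfm (τn n))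
  have hFatou : ∫⁻ ω, L ω ∂P ≤ C := by
    refine le_trans (lintegral_liminf_le fun n =>
      ENNReal.measurable_ofReal.comp (hfm (τn n))) ?_
    have : ∀ n : ℕ, ∫⁻ ω, ENNReal.ofReal ((τn n)⁻¹ * ∫ s in A (τn n), E (X ω s)) ∂P = C :=
      fun n => hEq (τn n) (hτnpos n)
    simp_rw [this]
    exact liminf_const C |>.le
  have hle : ∀ᵐ ω ∂P, ENNReal.ofReal (E (X ω t)) ≤ L ω := by
    filter_upwards [hlsc, hIA, hlim] with ω h1 h2 h3
    obtain ⟨l, hl⟩ := h3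
    have hfl : Tendsto (fun n => (τn n)⁻¹ * ∫ s in A (τn n), E (X ω s)) atTop (𝓝 l) :=
      hl.comp hτn
    have hLl : L ω = ENNReal.ofReal l :=
      ((ENNReal.continuous_ofReal.tendsto l).comp hfl).liminf_eq
    rw [hLl]
    exact ENNReal.ofReal_le_ofReal (step1 ω h1 h2 l hl)
  have haeq : (fun ω => ENNReal.ofReal (E (X ω t))) =ᵐ[P] L :=
    ae_eq_of_ae_le_of_lintegral_le hle (by rw [hC t]; exact hCfin) hLm.aemeasurable
      (by rw [hC t]; exact hFatou)
  filter_upwards [hlsc, hIA, hlim, haeq] with ω h1 h2 h3 h4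
  obtain ⟨l, hl⟩ := h3
  have hEl : E (X ω t) ≤ l := step1 ω h1 h2 l hl
  have hfl : Tendsto (fun n => (τn n)⁻¹ * ∫ s in A (τn n), E (X ω s)) atTop (𝓝 l) :=
    hl.comp hτn
  have hLl : L ω = ENNReal.ofReal l :=
    ((ENNReal.continuous_ofReal.tendsto l).comp hfl).liminf_eq
  rw [hLl] at h4
  have : E (X ω t) = l := by
    rwa [ENNReal.ofReal_eq_ofReal_iff (hE0 _) (le_trans (hE0 _) hEl)] at h4
  rw [this]
  exact hl

/-- Strong continuity of the energy of stationary processes: if `(ϱ,m)` is a stationary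
measurable process in a separable Banach space `H` and `E : H → [0,∞)` is Borel,
pathwise sequentially lower semicontinuous, with `𝔼[E(X(0))] < ∞` and locally integrable
paths, then for each fixed `t`, a.s. the energy at `t` equals both one-sided Lebesgue
averages (provided these one-sided limits exist a.s.). -/
theorem stmt19 {Ω : Type*} [MeasurableSpace Ω] (P : Measure Ω) [IsProbabilityMeasure P]
    {H : Type*} [NormedAddCommGroup H] [NormedSpace ℝ H]
    [TopologicalSpace.SeparableSpace H] [MeasurableSpace H] [BorelSpace H]
    (X : Ω → ℝ → H)
    (hmeas : Measurable (Function.uncurry X))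
    (hstat : ∀ (τ : ℝ) (n : ℕ) (t : Fin n → ℝ),
      Measure.map (fun ω => fun i => X ω (t i + τ)) P =
        Measure.map (fun ω => fun i => X ω (t i)) P)
    (E : H → ℝ) (hE0 : ∀ h, 0 ≤ E h) (hEmeas : Measurable E)
    (hlsc : ∀ᵐ ω ∂P, ∀ t : ℝ,
      E (X ω t) ≤ Filter.liminf (fun s => E (X ω s)) (𝓝[≠] t))
    (hint : Integrable (fun ω => E (X ω 0)) P)
    (hloc : ∀ᵐ ω ∂P, ∀ M > (0 : ℝ), IntegrableOn (fun s => E (X ω s)) (Icc (-M) M))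
    (t : ℝ)
    (hlim : ∀ᵐ ω ∂P,
      (∃ l : ℝ, Tendsto (fun τ : ℝ => τ⁻¹ * ∫ s in Ioc t (t + τ), E (X ω s))
        (𝓝[>] 0) (𝓝 l)) ∧
      (∃ l : ℝ, Tendsto (fun τ : ℝ => τ⁻¹ * ∫ s in Ico (t - τ) t, E (X ω s))
        (𝓝[>] 0) (𝓝 l))) :
    ∀ᵐ ω ∂P,
      Tendsto (fun τ : ℝ => τ⁻¹ * ∫ s in Ioc t (t + τ), E (X ω s))
        (𝓝[>] 0) (𝓝 (E (X ω t))) ∧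
      Tendsto (fun τ : ℝ => τ⁻¹ * ∫ s in Ico (t - τ) t, E (X ω s))
        (𝓝[>] 0) (𝓝 (E (X ω t))) := by
  -- one-dimensional marginals are all equal
  have hXm : ∀ r : ℝ, Measurable (fun ω => X ω r) := fun r =>
    hmeas.comp (measurable_id.prodMk measurable_const)
  have hmap : ∀ s : ℝ, Measure.map (fun ω => X ω s) P = Measure.map (fun ω => X ω 0) P := by
    intro s
    have h := hstat s 1 (fun _ => 0)
    have e0 : Measurable (fun f : Fin 1 → H => f 0) := measurable_pi_apply 0
    have h1 : Measurable (fun ω => fun _ : Fin 1 => X ω (0 + s)) :=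
      measurable_pi_lambda _ (fun _ => hXm _)
    have h2 : Measurable (fun ω => fun _ : Fin 1 => X ω ((0:ℝ))) :=
      measurable_pi_lambda _ (fun _ => hXm _)
    calc Measure.map (fun ω => X ω s) P
        = Measure.map (fun f : Fin 1 → H => f 0)
            (Measure.map (fun ω => fun _ : Fin 1 => X ω (0 + s)) P) := by
          rw [Measure.map_map e0 h1]
          simp [Function.comp_def]
      _ = Measure.map (fun f : Fin 1 → H => f 0)
            (Measure.map (fun ω => fun _ : Fin 1 => X ω 0) P) := by rw [h]
      _ = Measure.map (fun ω => X ω 0) P := by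
          rw [Measure.map_map e0 h2]
          rfl
  set C : ENNReal := ∫⁻ ω, ENNReal.ofReal (E (X ω 0)) ∂P with hCdef
  have hC : ∀ s : ℝ, ∫⁻ ω, ENNReal.ofReal (E (X ω s)) ∂P = C := by
    intro s
    have hme : Measurable fun h : H => ENNReal.ofReal (E h) :=
      ENNReal.measurable_ofReal.comp hEmeas
    rw [hCdef, ← lintegral_map hme (hXm s), ← lintegral_map hme (hXm 0), hmap s]
  have hCfin : C ≠ ⊤ := by
    rw [hCdef, ← ofReal_integral_eq_lintegral_ofReal hint (ae_of_all _ fun ω => hE0 _)]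
    exact ENNReal.ofReal_ne_top
  have hright := stmt19_aux P X hmeas E hE0 hEmeas hlsc hloc t C hC hCfin
    (fun τ => Ioc t (t + τ)) (fun τ => measurableSet_Ioc)
    (fun τ hτ => by rw [Real.volume_Ioc]; ring_nf)
    (fun τ hτ s hs => ⟨ne_of_gt hs.1, abs_le.2 ⟨by linarith [hs.1], by linarith [hs.2]⟩⟩)
    (hlim.mono fun ω h => h.1)
  have hleft := stmt19_aux P X hmeas E hE0 hEmeas hlsc hloc t C hC hCfin
    (fun τ => Ico (t - τ) t) (fun τ => measurableSet_Ico)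
    (fun τ hτ => by rw [Real.volume_Ico]; ring_nf)
    (fun τ hτ s hs => ⟨ne_of_lt hs.2, abs_le.2 ⟨by linarith [hs.1], by linarith [hs.2]⟩⟩)
    (hlim.mono fun ω h => h.2)
  filter_upwards [hright, hleft] with ω h1 h2
  exact ⟨h1, h2⟩
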